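/- Let V be a finite-dimensional (over F) irreducible (simple) unital left A-module. Then V is zero action determined if and only if dim_F V > dim_F End_A(V) or dim_F End_A(V) = 1, where End_A(V) is the F-algebra of A-module endomorphisms of V. -/

import Mathlib

/-- A unital left `A`-module `V` (with compatible `F`-vector space structure) is
*zero action determined* (zad) if every `F`-bilinear map `f : A × V → F` vanishing on
pairs with zero action is of the form `f(x, v) = Φ(x • v)` for some linear `Φ`. -/
def IsZad (F A V : Type*) [Field F] [Ring A] [Algebra F A]
    [AddCommGroup V] [Module F V] [Module A V] [IsScalarTower F A V] : Prop :=
  ∀ f : A →ₗ[F] V →ₗ[F] F,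
    (∀ (a : A) (m : V), a • m = 0 → f a m = 0) →
    ∃ Φ : V →ₗ[F] F, ∀ (x : A) (v : V), f x v = Φ (x • v)

section ZadAux

variable {F A V : Type*} [Field F] [Ring A] [Algebra F A]
  [AddCommGroup V] [Module F V] [Module A V] [IsScalarTower F A V]

private lemma zad_smul_comm (c : F) (b : A) (v : V) : c • (b • v) = b • (c • v) := by
  rw [← algebraMap_smul A c v, ← algebraMap_smul A c (b • v), ← mul_smul, ← mul_smul,
    Algebra.commutes]

private lemma zad_id_ne_zero [Nontrivial V] : (LinearMap.id : V →ₗ[A] V) ≠ 0 := by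
  intro h
  obtain ⟨v, hv⟩ := exists_ne (0 : V)
  exact hv (by simpa using LinearMap.congr_fun h v)

/-- two-point density lemma from simplicity -/
private lemma zad_two_point [IsSimpleModule A V] {x y : V} (hx : x ≠ 0)
    (hP : ∀ l : V →ₗ[A] V, l x ≠ y) (u : V) :
    ∃ a : A, a • x = 0 ∧ a • y = u := by
  set Tx := LinearMap.toSpanSingleton A V x with hTx
  set Ty := LinearMap.toSpanSingleton A V y with hTy
  rcases eq_bot_or_eq_top ((LinearMap.ker Tx).map Ty) with hbot | htop
  · exfalso
    have hle : LinearMap.ker Tx ≤ LinearMap.ker Ty := by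
      intro a ha
      have h1 : Ty a ∈ (LinearMap.ker Tx).map Ty := Submodule.mem_map_of_mem ha
      rw [hbot] at h1
      simpa using h1
    have hsurj : Function.Surjective Tx := IsSimpleModule.toSpanSingleton_surjective A hx
    let E := Tx.quotKerEquivOfSurjective hsurj
    let l : V →ₗ[A] V :=
      ((LinearMap.ker Tx).liftQ Ty hle).comp E.symm.toLinearMap
    apply hP l
    have h1 : E (Submodule.Quotient.mk 1) = x := by
      show Tx 1 = x
      simp [hTx]
    have h2 : E.symm x = Submodule.Quotient.mk 1 := by
      rw [← h1, LinearEquiv.symm_apply_apply]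
    show ((LinearMap.ker Tx).liftQ Ty hle) (E.symm x) = y
    rw [h2, Submodule.liftQ_apply]
    simp [hTy]
  · have hu : u ∈ (LinearMap.ker Tx).map Ty := htop ▸ Submodule.mem_top
    obtain ⟨a, ha, hau⟩ := hu
    exact ⟨a, by simpa [hTx] using (LinearMap.mem_ker.mp ha), by simpa [hTy] using hau⟩

variable [IsSimpleModule A V]

private lemma zad_W (f : A →ₗ[F] V →ₗ[F] F)
    (h0 : ∀ (a : A) (m : V), a • m = 0 → f a m = 0)
    {a b : A} {v : V} (h : a • v = b • v) : f a v = f b v := by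
  have h1 : (a - b) • v = 0 := by rw [sub_smul, h, sub_self]
  have h2 := h0 (a - b) v h1
  rw [map_sub, LinearMap.sub_apply] at h2
  exact sub_eq_zero.mp h2

/-- transfer along independent vectors -/
private lemma zad_X1 (f : A →ₗ[F] V →ₗ[F] F)
    (h0 : ∀ (a : A) (m : V), a • m = 0 → f a m = 0)
    {v w : V} (hI : ∀ l m : V →ₗ[A] V, l v + m w = 0 → l = 0 ∧ m = 0)
    {a b : A} (hab : a • v = b • w) : f a v = f b w := by
  have hNT : Nontrivial V := IsSimpleModule.nontrivial A V
  have hvw : v - w ≠ 0 := by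
    intro h
    have h1 : (LinearMap.id : V →ₗ[A] V) v + (-LinearMap.id : V →ₗ[A] V) w = 0 := by
      simp only [LinearMap.id_coe, id_eq, LinearMap.neg_apply]
      rw [← sub_eq_add_neg, h]
    exact zad_id_ne_zero (A := A) (hI _ _ h1).1
  have hP : ∀ l : V →ₗ[A] V, l (v - w) ≠ v := by
    intro l hl
    have h1 : (l - LinearMap.id : V →ₗ[A] V) v + (-l) w = 0 := by
      have h5 : l v - l w - v = 0 := by rw [← map_sub, hl, sub_self]
      simp only [LinearMap.sub_apply, LinearMap.neg_apply, LinearMap.id_coe, id_eq]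
      abel_nf at h5 ⊢
      exact h5
    have h2 := hI _ _ h1
    have h3 : l = LinearMap.id := by
      have := h2.1; rwa [sub_eq_zero] at this
    have h4 : l = 0 := by
      have := h2.2; simpa [neg_eq_zero] using this
    exact zad_id_ne_zero (A := A) (h3 ▸ h4)
  obtain ⟨c, hc1, hc2⟩ := zad_two_point hvw hP (a • v)
  have hcw : c • w = b • w := by
    have h1 : c • v - c • w = 0 := by rw [← smul_sub]; exact hc1
    have h2 : c • w = c • v := by
      have := sub_eq_zero.mp h1; exact this.symm
    rw [h2, hc2, hab]
  have hfvw : f c v = f c w := by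
    have h1 := h0 c (v - w) hc1
    rw [map_sub] at h1
    exact sub_eq_zero.mp h1
  calc f a v = f c v := zad_W f h0 hc2.symm
    _ = f c w := hfvw
    _ = f b w := zad_W f h0 hcw

private lemma zad_findim [FiniteDimensional F V] :
    FiniteDimensional F (V →ₗ[A] V) := by
  let r : (V →ₗ[A] V) →ₗ[F] (V →ₗ[F] V) :=
    { toFun := fun l => l.restrictScalars F
      map_add' := fun _ _ => rfl
      map_smul' := fun _ _ => rfl }
  refine FiniteDimensional.of_injective r fun l m h => ?_
  ext v
  exact LinearMap.congr_fun h v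

/-- the full transfer lemma -/
private lemma zad_X [FiniteDimensional F V]
    (hcond : Module.finrank F V > Module.finrank F (V →ₗ[A] V) ∨
      Module.finrank F (V →ₗ[A] V) = 1)
    (f : A →ₗ[F] V →ₗ[F] F)
    (h0 : ∀ (a : A) (m : V), a • m = 0 → f a m = 0)
    {v w : V} (hv : v ≠ 0) (hw : w ≠ 0)
    {a b : A} (hab : a • v = b • w) : f a v = f b w := by
  have hNT : Nontrivial V := IsSimpleModule.nontrivial A V
  by_cases hI : ∀ l m : V →ₗ[A] V, l v + m w = 0 → l = 0 ∧ m = 0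
  · exact zad_X1 f h0 hI hab
  · push_neg at hI
    obtain ⟨l, m, hlm, hne⟩ := hI
    have hm : m ≠ 0 := by
      rintro rfl
      have h1 : l v = 0 := by simpa using hlm
      have h2 : l = 0 := by
        by_contra hl0
        exact hv ((LinearMap.bijective_of_ne_zero hl0).injective (by simpa using h1))
      exact hne h2 rfl
    let me : V ≃ₗ[A] V := LinearEquiv.ofBijective m (LinearMap.bijective_of_ne_zero hm)
    let ρ : V →ₗ[A] V := -(me.symm.toLinearMap.comp l)
    have hρ : ρ v = w := by
      have h1 : m w = -(l v) := eq_neg_of_add_eq_zero_right hlm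
      have h2 : ρ v = -(me.symm (l v)) := rfl
      rw [h2, ← map_neg, ← h1]
      exact me.symm_apply_apply w
    rcases hcond with hgt | hd1
    · haveI : FiniteDimensional F (V →ₗ[A] V) := zad_findim
      let ev : (V →ₗ[A] V) →ₗ[F] V :=
        { toFun := fun l => l v
          map_add' := fun _ _ => rfl
          map_smul' := fun _ _ => rfl }
      have hrange : LinearMap.range ev ≠ ⊤ := by
        intro htop
        have h1 : Module.finrank F (LinearMap.range ev) ≤ Module.finrank F (V →ₗ[A] V) :=
          LinearMap.finrank_range_le ev
        rw [htop, finrank_top] at h1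
        omega
      obtain ⟨z, hz⟩ : ∃ z, z ∉ LinearMap.range ev := by
        by_contra h
        push_neg at h
        exact hrange (Submodule.eq_top_iff'.mpr h)
      have hznz : z ≠ 0 := by
        rintro rfl
        exact hz (Submodule.zero_mem _)
      -- independence of v, z
      have hIvz : ∀ l' m' : V →ₗ[A] V, l' v + m' z = 0 → l' = 0 ∧ m' = 0 := by
        intro l' m' h'
        have hm' : m' = 0 := by
          by_contra hm'0
          let me' : V ≃ₗ[A] V := LinearEquiv.ofBijective m' (LinearMap.bijective_of_ne_zero hm'0)
          have h1 : m' z = -(l' v) := eq_neg_of_add_eq_zero_right h'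
          have h2 : (-(me'.symm.toLinearMap.comp l')) v = z := by
            show -(me'.symm (l' v)) = z
            rw [← map_neg, ← h1]
            exact me'.symm_apply_apply z
          exact hz ⟨-(me'.symm.toLinearMap.comp l'), h2⟩
        refine ⟨?_, hm'⟩
        rw [hm'] at h'
        have h1 : l' v = 0 := by simpa using h'
        by_contra hl'0
        exact hv ((LinearMap.bijective_of_ne_zero hl'0).injective (by simpa using h1))
      have hIwz : ∀ l' m' : V →ₗ[A] V, l' w + m' z = 0 → l' = 0 ∧ m' = 0 := by
        intro l' m' h'
        have h1 : (l'.comp ρ) v + m' z = 0 := by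
          show l' (ρ v) + m' z = 0
          rw [hρ]; exact h'
        obtain ⟨h2, h3⟩ := hIvz _ _ h1
        refine ⟨?_, h3⟩
        have hρ0 : ρ ≠ 0 := by
          intro h4
          apply hw
          rw [← hρ, h4, LinearMap.zero_apply]
        have hρsurj := (LinearMap.bijective_of_ne_zero hρ0).surjective
        ext x
        obtain ⟨y, rfl⟩ := hρsurj x
        exact LinearMap.congr_fun h2 y
      obtain ⟨eA, heA⟩ := IsSimpleModule.toSpanSingleton_surjective A hznz (a • v)
      have heA' : eA • z = a • v := by simpa using heA
      have h1 : f a v = f eA z := zad_X1 f h0 hIvz heA'.symm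
      have h2 : f b w = f eA z := zad_X1 f h0 hIwz (by rw [heA', hab])
      rw [h1, h2]
    · obtain ⟨c, hc⟩ := (finrank_eq_one_iff_of_nonzero' (LinearMap.id : V →ₗ[A] V)
        (zad_id_ne_zero (A := A))).mp hd1 ρ
      have hwcv : w = c • v := by
        rw [← hρ, ← hc]
        rfl
      have hb : a • v = (c • b) • v := by
        have h1 : (c • b) • v = c • (b • v) := smul_assoc c b v
        rw [h1, zad_smul_comm, ← hwcv, hab]
      calc f a v = f (c • b) v := zad_W f h0 hb
        _ = c • (f b v) := by rw [map_smul]; rfl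
        _ = f b (c • v) := (map_smul (f b) c v).symm
        _ = f b w := by rw [← hwcv]

end ZadAux

/-- a finite-dimensional irreducible `A`-module `V` is zad iff
`dim V > dim End_A(V)` or `dim End_A(V) = 1`. -/
theorem stmt_9 (F A V : Type*) [Field F] [Ring A] [Algebra F A]
    [AddCommGroup V] [Module F V] [Module A V] [IsScalarTower F A V]
    [FiniteDimensional F V] [IsSimpleModule A V] :
    IsZad F A V ↔
      Module.finrank F V > Module.finrank F (V →ₗ[A] V) ∨
        Module.finrank F (V →ₗ[A] V) = 1 := by
  have hNT : Nontrivial V := IsSimpleModule.nontrivial A V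
  obtain ⟨v₀, hv₀⟩ := exists_ne (0 : V)
  constructor
  · -- zad implies the dimension condition
    intro hz
    by_contra hc
    push_neg at hc
    obtain ⟨hle, hd⟩ := hc
    have hle' : Module.finrank F V ≤ Module.finrank F (V →ₗ[A] V) := hle
    -- evaluation at v₀ is an F-linear bijection D ≃ V
    let ev : (V →ₗ[A] V) →ₗ[F] V :=
      { toFun := fun l => l v₀
        map_add' := fun _ _ => rfl
        map_smul' := fun _ _ => rfl }
    have hinj : Function.Injective ev := by
      intro l m h
      by_contra hne
      have hlm : l - m ≠ 0 := sub_ne_zero.mpr hne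
      apply hv₀
      apply (LinearMap.bijective_of_ne_zero hlm).injective
      show (l - m) v₀ = (l - m) 0
      have h' : l v₀ = m v₀ := h
      simp [LinearMap.sub_apply, h']
    haveI hFD : FiniteDimensional F (V →ₗ[A] V) := zad_findim
    have hfr : Module.finrank F (V →ₗ[A] V) = Module.finrank F V :=
      le_antisymm (LinearMap.finrank_le_finrank_of_injective hinj) hle'
    have hsurj : Function.Surjective ev := by
      rw [← LinearMap.range_eq_top]
      apply Submodule.eq_top_of_finrank_eq
      rw [LinearMap.finrank_range_of_inj hinj, hfr]
    let e : (V →ₗ[A] V) ≃ₗ[F] V := LinearEquiv.ofBijective ev ⟨hinj, hsurj⟩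
    -- d ≥ 2
    haveI : Nontrivial (V →ₗ[A] V) := ⟨LinearMap.id, 0, zad_id_ne_zero (A := A)⟩
    have hd0 : 0 < Module.finrank F (V →ₗ[A] V) := Module.finrank_pos
    have hd2 : 2 ≤ Module.finrank F (V →ₗ[A] V) := by omega
    -- the composition bilinear map and the "trace form" comparison map
    let N : (V →ₗ[A] V) →ₗ[F] (V →ₗ[A] V) →ₗ[F] (V →ₗ[A] V) :=
      LinearMap.mk₂ F (fun x y => y.comp x)
        (fun x x' y => by ext u; simp)
        (fun c x y => by ext u; simp)
        (fun x y y' => by ext u; simp)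
        (fun c x y => by ext u; simp)
    let T : ((V →ₗ[A] V) →ₗ[F] F) →ₗ[F]
        ((V →ₗ[A] V) →ₗ[F] (V →ₗ[A] V) →ₗ[F] F) :=
      { toFun := fun Ψ => N.compr₂ Ψ
        map_add' := fun Ψ Ψ' => by ext x y; simp [LinearMap.compr₂_apply]
        map_smul' := fun c Ψ => by ext x y; simp [LinearMap.compr₂_apply] }
    obtain ⟨B, hB⟩ : ∃ B, B ∉ LinearMap.range T := by
      by_contra h
      push_neg at h
      have htop : LinearMap.range T = ⊤ := Submodule.eq_top_iff'.mpr h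
      have h1 : Module.finrank F ((V →ₗ[A] V) →ₗ[F] (V →ₗ[A] V) →ₗ[F] F)
          ≤ Module.finrank F ((V →ₗ[A] V) →ₗ[F] F) := by
        have h2 := LinearMap.finrank_range_le T
        rwa [htop, finrank_top] at h2
      set d := Module.finrank F (V →ₗ[A] V) with hdd
      have e1 : Module.finrank F ((V →ₗ[A] V) →ₗ[F] F) = d * 1 := by
        rw [Module.finrank_linearMap (R := F) (S := F), Module.finrank_self]
      have e2 : Module.finrank F ((V →ₗ[A] V) →ₗ[F] (V →ₗ[A] V) →ₗ[F] F) = d * (d * 1) := by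
        rw [Module.finrank_linearMap (R := F) (S := F), e1]
      rw [e1, e2] at h1
      nlinarith
    -- build the bilinear map f
    let T0 : A →ₗ[F] V :=
      { toFun := fun a => a • v₀
        map_add' := fun a b => add_smul a b v₀
        map_smul' := fun c a => smul_assoc c a v₀ }
    let La : A →ₗ[F] (V →ₗ[A] V) := e.symm.toLinearMap.comp T0
    let f : A →ₗ[F] V →ₗ[F] F := (B.comp La).compl₂ e.symm.toLinearMap
    have hfav : ∀ (a : A) (v : V), f a v = B (e.symm (a • v₀)) (e.symm v) := fun a v => rfl
    have key : ∀ (a : A) (v : V), a • v = e ((e.symm v).comp (e.symm (a • v₀))) := by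
      intro a v
      have h1 : (e.symm v) v₀ = v := e.apply_symm_apply v
      have h2 : (e.symm (a • v₀)) v₀ = a • v₀ := e.apply_symm_apply (a • v₀)
      show a • v = ((e.symm v).comp (e.symm (a • v₀))) v₀
      rw [LinearMap.comp_apply, h2, map_smul, h1]
    have hvan : ∀ (a : A) (m : V), a • m = 0 → f a m = 0 := by
      intro a m hm
      have h1 : (e.symm m).comp (e.symm (a • v₀)) = 0 := by
        apply e.injective
        rw [← key a m, hm, map_zero]
      rw [hfav]
      set lam := e.symm (a • v₀)
      set mu := e.symm m
      by_cases hlam : lam = 0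
      · rw [hlam, map_zero, LinearMap.zero_apply]
      · have hmu : mu = 0 := by
          have hsurj' := (LinearMap.bijective_of_ne_zero hlam).surjective
          ext x
          obtain ⟨y, rfl⟩ := hsurj' x
          exact LinearMap.congr_fun h1 y
        rw [hmu, map_zero]
    obtain ⟨Φ, hΦ⟩ := hz f hvan
    apply hB
    refine ⟨Φ.comp e.toLinearMap, ?_⟩
    ext x y
    show Φ (e (y.comp x)) = B x y
    obtain ⟨a, ha⟩ := IsSimpleModule.toSpanSingleton_surjective A hv₀ (e x)
    have ha' : a • v₀ = e x := by simpa using ha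
    have h1 := hΦ a (e y)
    rw [hfav, ha', e.symm_apply_apply, e.symm_apply_apply, key a (e y), ha',
      e.symm_apply_apply, e.symm_apply_apply] at h1
    exact h1.symm
  · -- the dimension condition implies zad
    intro hcond f h0
    let T0 : A →ₗ[F] V :=
      { toFun := fun a => a • v₀
        map_add' := fun a b => add_smul a b v₀
        map_smul' := fun c a => smul_assoc c a v₀ }
    have hT0 : LinearMap.range T0 = ⊤ := by
      rw [LinearMap.range_eq_top]
      intro u
      obtain ⟨a, ha⟩ := IsSimpleModule.toSpanSingleton_surjective A hv₀ u
      exact ⟨a, (by simpa using ha : a • v₀ = u)⟩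
    obtain ⟨s, hs⟩ := T0.exists_rightInverse_of_surjective hT0
    refine ⟨(f.flip v₀).comp s, fun x v => ?_⟩
    by_cases hv : v = 0
    · subst hv
      simp
    · have hsu : (s (x • v)) • v₀ = x • v := LinearMap.congr_fun hs (x • v)
      have h1 : f x v = f (s (x • v)) v₀ := zad_X hcond f h0 hv hv₀ hsu.symm
      rw [h1]
      rfl
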